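/- Let $T$ be a real symmetric $3 \times 3$ matrix with $\operatorname{tr}(T) = 0$. Then for every $v \in \mathbb{R}^3$, $|\langle Tv, v\rangle| \leq \sqrt{2/3}\, \|T\|_F \, \|v\|^2$. -/

import Mathlib

open Matrix

/-- Frobenius norm of a real square matrix. -/
noncomputable def frobNorm {n : ℕ} (M : Matrix (Fin n) (Fin n) ℝ) : ℝ :=
  Real.sqrt (Matrix.trace (Mᵀ * M))

private lemma aux_cs (a b c d e f g h i x y z : ℝ) (htr : a + e + i = 0) :
    (a*x*x + b*x*y + c*x*z + d*y*x + e*y*y + f*y*z + g*z*x + h*z*y + i*z*z)^2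
    ≤ (a^2+b^2+c^2+d^2+e^2+f^2+g^2+h^2+i^2) * (2/3 * (x*x+y*y+z*z)^2) := by
  have CS : (a*(x*x-(x*x+y*y+z*z)/3) + b*(x*y) + c*(x*z) + d*(y*x)
      + e*(y*y-(x*x+y*y+z*z)/3) + f*(y*z) + g*(z*x) + h*(z*y)
      + i*(z*z-(x*x+y*y+z*z)/3))^2
      ≤ (a^2+b^2+c^2+d^2+e^2+f^2+g^2+h^2+i^2) *
        ((x*x-(x*x+y*y+z*z)/3)^2 + (x*y)^2 + (x*z)^2 + (y*x)^2
         + (y*y-(x*x+y*y+z*z)/3)^2 + (y*z)^2 + (z*x)^2 + (z*y)^2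
         + (z*z-(x*x+y*y+z*z)/3)^2) := by
    have h9 := Finset.sum_mul_sq_le_sq_mul_sq (Finset.univ : Finset (Fin 9))
      (fun k => ![a,b,c,d,e,f,g,h,i] k)
      (fun k => ![x*x-(x*x+y*y+z*z)/3, x*y, x*z, y*x, y*y-(x*x+y*y+z*z)/3, y*z,
        z*x, z*y, z*z-(x*x+y*y+z*z)/3] k)
    simp only [Fin.sum_univ_succ, Finset.univ_eq_empty, Finset.sum_empty,
      Matrix.cons_val_zero, Matrix.cons_val_succ, add_zero, Fin.succ_zero_eq_one] at h9
    linarith [h9]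
  have e1 : a*(x*x-(x*x+y*y+z*z)/3) + b*(x*y) + c*(x*z) + d*(y*x)
      + e*(y*y-(x*x+y*y+z*z)/3) + f*(y*z) + g*(z*x) + h*(z*y)
      + i*(z*z-(x*x+y*y+z*z)/3)
      = a*x*x + b*x*y + c*x*z + d*y*x + e*y*y + f*y*z + g*z*x + h*z*y + i*z*z := by
    linear_combination (-(x*x+y*y+z*z)/3) * htr
  have e2 : (x*x-(x*x+y*y+z*z)/3)^2 + (x*y)^2 + (x*z)^2 + (y*x)^2
      + (y*y-(x*x+y*y+z*z)/3)^2 + (y*z)^2 + (z*x)^2 + (z*y)^2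
      + (z*z-(x*x+y*y+z*z)/3)^2 = 2/3 * (x*x+y*y+z*z)^2 := by ring
  rw [e1, e2] at CS
  exact CS

/-- Sharp estimate for a trace-free symmetric endomorphism of a rank-3 space
(Lemma 2.2 of the paper): `|⟨Tv, v⟩| ≤ √(2/3) ‖T‖_F ‖v‖²`. -/
theorem traceless_symmetric_quadratic_form_le
    (T : Matrix (Fin 3) (Fin 3) ℝ) (hT : Tᵀ = T) (htr : Matrix.trace T = 0)
    (v : Fin 3 → ℝ) :
    |dotProduct (T.mulVec v) v| ≤
      Real.sqrt (2 / 3) * frobNorm T * dotProduct v v := by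
  set s : ℝ := dotProduct v v with hs
  have hs' : s = v 0 * v 0 + v 1 * v 1 + v 2 * v 2 := by
    simp [hs, dotProduct, Fin.sum_univ_three]
  have hsnn : 0 ≤ s := by nlinarith [sq_nonneg (v 0), sq_nonneg (v 1), sq_nonneg (v 2)]
  set tr : ℝ := Matrix.trace (Tᵀ * T) with htrTT
  have htr' : T 0 0 + T 1 1 + T 2 2 = 0 := by
    simpa [Matrix.trace, Fin.sum_univ_three] using htr
  have hQe : dotProduct (T.mulVec v) v =
      T 0 0*v 0*v 0 + T 0 1*v 0*v 1 + T 0 2*v 0*v 2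
      + T 1 0*v 1*v 0 + T 1 1*v 1*v 1 + T 1 2*v 1*v 2
      + T 2 0*v 2*v 0 + T 2 1*v 2*v 1 + T 2 2*v 2*v 2 := by
    simp [dotProduct, Matrix.mulVec, Fin.sum_univ_three]
    ring
  have htre : tr = T 0 0^2 + T 0 1^2 + T 0 2^2 + T 1 0^2 + T 1 1^2 + T 1 2^2
      + T 2 0^2 + T 2 1^2 + T 2 2^2 := by
    simp [htrTT, Matrix.trace, Matrix.mul_apply, Matrix.diag, Fin.sum_univ_three]
    ring
  have key : (dotProduct (T.mulVec v) v) ^ 2 ≤ tr * (2 / 3 * s ^ 2) := by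
    rw [hQe, htre, hs']
    exact aux_cs _ _ _ _ _ _ _ _ _ _ _ _ htr'
  have htrnn : 0 ≤ tr := by rw [htre]; positivity
  rw [(Real.sqrt_sq_eq_abs _).symm.trans rfl]
  calc Real.sqrt ((dotProduct (T.mulVec v) v) ^ 2)
      ≤ Real.sqrt (tr * (2 / 3 * s ^ 2)) := Real.sqrt_le_sqrt key
    _ = Real.sqrt (2 / 3) * frobNorm T * s := by
        rw [show tr * (2 / 3 * s ^ 2) = 2 / 3 * tr * s ^ 2 by ring,
          Real.sqrt_mul (by positivity), Real.sqrt_mul (by norm_num), Real.sqrt_sq hsnn]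
        simp [frobNorm, htrTT, mul_assoc]
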